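/- Let S be a standard graded algebra over a field k with s₁ = dim_k S_1 ≥ 1, and let θ ∈ S_d be a homogeneous element of degree d ≥ 2. Then there exist square matrices M and M̌ of size 2^{s₁−1} × 2^{s₁−1} with entries in S, each entry being a homogeneous element of positive degree (in particular each entry lies in the irrelevant ideal S₊), such that M · M̌ = θ · I and M̌ · M = θ · I, where I denotes the 2^{s₁−1} × 2^{s₁−1} identity matrix. -/

import Mathlib

/-- Tensor-product construction of matrix factorizations: if `θ = ∑ xᵢ yᵢ` with `n + 1`
terms, `xᵢ` of degree 1 and `yᵢ` of degree `e ≥ 1`, then `θ • 1` factors as a product of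
two `2^n × 2^n` matrices with homogeneous entries of positive degree. -/
lemma aux_mf {k S : Type*} [Field k] [CommRing S] [Algebra k S]
    (𝒜 : ℕ → Submodule k S) (e : ℕ) (he : 1 ≤ e) :
    ∀ (n : ℕ) (x y : Fin (n + 1) → S), (∀ i, x i ∈ 𝒜 1) → (∀ i, y i ∈ 𝒜 e) →
    ∃ M Mc : Matrix (Fin (2 ^ n)) (Fin (2 ^ n)) S,
      (∀ i j, ∃ e' : ℕ, 1 ≤ e' ∧ M i j ∈ 𝒜 e') ∧
      (∀ i j, ∃ e' : ℕ, 1 ≤ e' ∧ Mc i j ∈ 𝒜 e') ∧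
      M * Mc = (∑ i, x i * y i) • (1 : Matrix (Fin (2 ^ n)) (Fin (2 ^ n)) S) ∧
      Mc * M = (∑ i, x i * y i) • (1 : Matrix (Fin (2 ^ n)) (Fin (2 ^ n)) S) := by
  intro n
  induction n with
  | zero =>
    intro x y hx hy
    refine ⟨Matrix.of fun _ _ => x 0, Matrix.of fun _ _ => y 0,
      fun i j => ⟨1, le_refl 1, hx 0⟩, fun i j => ⟨e, he, hy 0⟩, ?_, ?_⟩ <;>
    · ext i j
      have hij : i = j := Fin.ext (by omega)
      subst hij
      have h1 : i = (0 : Fin (2 ^ 0)) := Fin.ext (by omega)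
      simp [Matrix.mul_apply, Matrix.one_apply, h1, mul_comm]
  | succ n ih =>
    intro x y hx hy
    obtain ⟨M1, M1c, hM1, hM1c, hmul1, hmul2⟩ :=
      ih (fun i => x i.succ) (fun i => y i.succ) (fun i => hx i.succ) (fun i => hy i.succ)
    set θ' : S := ∑ i : Fin (n + 1), x i.succ * y i.succ with hθ'
    have hsum : ∑ i : Fin (n + 2), x i * y i = x 0 * y 0 + θ' := by
      rw [Fin.sum_univ_succ]
    set e2 : Fin (2 ^ n) ⊕ Fin (2 ^ n) ≃ Fin (2 ^ (n + 1)) :=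
      finSumFinEquiv.trans (finCongr (by rw [pow_succ, mul_two])) with he2
    set A : Matrix (Fin (2 ^ n) ⊕ Fin (2 ^ n)) (Fin (2 ^ n) ⊕ Fin (2 ^ n)) S :=
      Matrix.fromBlocks M1 (x 0 • 1) (y 0 • 1) (-M1c) with hA
    set B : Matrix (Fin (2 ^ n) ⊕ Fin (2 ^ n)) (Fin (2 ^ n) ⊕ Fin (2 ^ n)) S :=
      Matrix.fromBlocks M1c (x 0 • 1) (y 0 • 1) (-M1) with hB
    have hoff1 : ∀ P : Matrix (Fin (2 ^ n)) (Fin (2 ^ n)) S,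
        P * (x 0 • 1) + (x 0 • 1) * (-P) = 0 := fun P => by
      simp [Matrix.mul_smul, Matrix.smul_mul]
    have hoff2 : ∀ P : Matrix (Fin (2 ^ n)) (Fin (2 ^ n)) S,
        (y 0 • 1) * P + (-P) * (y 0 • 1) = 0 := fun P => by
      simp [Matrix.mul_smul, Matrix.smul_mul]
    have hd1 : θ' • (1 : Matrix (Fin (2 ^ n)) (Fin (2 ^ n)) S) + (x 0 • 1) * (y 0 • 1)
        = (x 0 * y 0 + θ') • 1 := by
      simp [Matrix.mul_smul, Matrix.smul_mul, smul_smul, add_smul, add_comm, mul_comm (y 0) (x 0)]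
    have hd2 : (y 0 • (1 : Matrix (Fin (2 ^ n)) (Fin (2 ^ n)) S)) * (x 0 • 1) + θ' • 1
        = (x 0 * y 0 + θ') • 1 := by
      simp [Matrix.mul_smul, Matrix.smul_mul, smul_smul, add_smul, add_comm, mul_comm (y 0) (x 0)]
    have hone : (x 0 * y 0 + θ') • (1 : Matrix (Fin (2 ^ n) ⊕ Fin (2 ^ n)) (Fin (2 ^ n) ⊕ Fin (2 ^ n)) S)
        = Matrix.fromBlocks ((x 0 * y 0 + θ') • 1) 0 0 ((x 0 * y 0 + θ') • 1) := by
      rw [← Matrix.fromBlocks_one, Matrix.fromBlocks_smul, smul_zero]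
    have hAB : A * B = (x 0 * y 0 + θ') • 1 := by
      rw [hA, hB, Matrix.fromBlocks_multiply, hmul1, neg_mul_neg, hmul2,
        hoff1 M1, hoff2 M1c, hd1, hd2, hone]
    have hBA : B * A = (x 0 * y 0 + θ') • 1 := by
      rw [hA, hB, Matrix.fromBlocks_multiply, hmul2, neg_mul_neg, hmul1,
        hoff1 M1c, hoff2 M1, hd1, hd2, hone]
    have hentA : ∀ p q, ∃ e' : ℕ, 1 ≤ e' ∧ A p q ∈ 𝒜 e' := by
      rintro (p | p) (q | q)
      · exact hM1 p q
      · refine ⟨1, le_refl 1, ?_⟩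
        by_cases h : p = q <;>
          simp [hA, Matrix.smul_apply, Matrix.one_apply, h, smul_eq_mul, hx 0, (𝒜 1).zero_mem]
      · refine ⟨e, he, ?_⟩
        by_cases h : p = q <;>
          simp [hA, Matrix.smul_apply, Matrix.one_apply, h, smul_eq_mul, hy 0, (𝒜 e).zero_mem]
      · obtain ⟨e', he', hm⟩ := hM1c p q
        exact ⟨e', he', by simpa [hA] using (𝒜 e').neg_mem hm⟩
    have hentB : ∀ p q, ∃ e' : ℕ, 1 ≤ e' ∧ B p q ∈ 𝒜 e' := by
      rintro (p | p) (q | q)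
      · exact hM1c p q
      · refine ⟨1, le_refl 1, ?_⟩
        by_cases h : p = q <;>
          simp [hB, Matrix.smul_apply, Matrix.one_apply, h, smul_eq_mul, hx 0, (𝒜 1).zero_mem]
      · refine ⟨e, he, ?_⟩
        by_cases h : p = q <;>
          simp [hB, Matrix.smul_apply, Matrix.one_apply, h, smul_eq_mul, hy 0, (𝒜 e).zero_mem]
      · obtain ⟨e', he', hm⟩ := hM1 p q
        exact ⟨e', he', by simpa [hB] using (𝒜 e').neg_mem hm⟩
    refine ⟨A.submatrix e2.symm e2.symm, B.submatrix e2.symm e2.symm,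
      fun i j => hentA _ _, fun i j => hentB _ _, ?_, ?_⟩
    · rw [Matrix.submatrix_mul_equiv, hAB, hsum]
      simp [Matrix.submatrix_smul, Matrix.submatrix_one_equiv]
    · rw [Matrix.submatrix_mul_equiv, hBA, hsum]
      simp [Matrix.submatrix_smul, Matrix.submatrix_one_equiv]

/-- Since `S₁ · S_{d-1} = S_d`, every `θ ∈ S_d` can be written `θ = ∑ xᵢ yᵢ` where the
`xᵢ` form a basis of `S₁` (so `s₁` terms) and `yᵢ ∈ S_{d-1}`. -/
lemma decomp_mf {k S : Type*} [Field k] [CommRing S] [Algebra k S]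
    (𝒜 : ℕ → Submodule k S)
    (hgen : ∀ i : ℕ, 𝒜 1 * 𝒜 i = 𝒜 (i + 1))
    [hfin : FiniteDimensional k (𝒜 1)]
    (s₁ : ℕ) (hs₁ : s₁ = Module.finrank k (𝒜 1))
    (d : ℕ) (hd : 2 ≤ d) (θ : S) (hθ : θ ∈ 𝒜 d) :
    ∃ x y : Fin s₁ → S, (∀ i, x i ∈ 𝒜 1) ∧ (∀ i, y i ∈ 𝒜 (d - 1)) ∧
      θ = ∑ i, x i * y i := by
  have b : Module.Basis (Fin s₁) k (𝒜 1) :=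
    (Module.finBasis k (𝒜 1)).reindex (finCongr hs₁.symm)
  set X : Fin s₁ → S := fun i => (b i : S) with hX
  have hXmem : ∀ i, X i ∈ 𝒜 1 := fun i => (b i).2
  have hmem : θ ∈ 𝒜 1 * 𝒜 (d - 1) := by
    rw [hgen (d - 1)]
    have : d - 1 + 1 = d := by omega
    rwa [this]
  refine ⟨X, ?_⟩
  have := Submodule.mul_induction_on (C := fun z =>
      ∃ y : Fin s₁ → S, (∀ i, y i ∈ 𝒜 (d - 1)) ∧ z = ∑ i, X i * y i) hmem ?_ ?_
  · obtain ⟨y, hy, hzy⟩ := this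
    exact ⟨y, hXmem, hy, hzy⟩
  · intro m hm nn hnn
    refine ⟨fun i => (b.repr ⟨m, hm⟩ i) • nn, fun i => (𝒜 (d-1)).smul_mem _ hnn, ?_⟩
    have hrep : m = ∑ i, (b.repr ⟨m, hm⟩ i) • X i := by
      have := b.sum_repr ⟨m, hm⟩
      have := congrArg (Subtype.val) this
      simp only [Submodule.coe_sum, Submodule.coe_smul] at this
      exact this.symm
    calc m * nn = (∑ i, (b.repr ⟨m, hm⟩ i) • X i) * nn := by rw [← hrep]
      _ = ∑ i, ((b.repr ⟨m, hm⟩ i) • X i) * nn := by rw [Finset.sum_mul]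
      _ = ∑ i, X i * ((b.repr ⟨m, hm⟩ i) • nn) := by
          refine Finset.sum_congr rfl fun i _ => ?_
          rw [smul_mul_assoc, mul_smul_comm]
  · rintro a bb ⟨ya, hya, rfl⟩ ⟨yb, hyb, rfl⟩
    exact ⟨fun i => ya i + yb i, fun i => (𝒜 (d-1)).add_mem (hya i) (hyb i),
      by simp [mul_add, Finset.sum_add_distrib]⟩

/-- **Matrix factorization lemma.** Let `S` be a standard graded algebra over a field `k`
with `s₁ = dim_k S₁ ≥ 1` and let `θ ∈ S_d` with `d ≥ 2`. Then there are square matrices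
`M`, `M̌` of size `2^(s₁−1)` with homogeneous entries of positive degree such that
`M * M̌ = θ • 1` and `M̌ * M = θ • 1`. -/
theorem stmt_3 {k S : Type*} [Field k] [CommRing S] [Algebra k S]
    (𝒜 : ℕ → Submodule k S) [GradedAlgebra 𝒜]
    (h0 : 𝒜 0 = (1 : Submodule k S))
    (hgen : ∀ i : ℕ, 𝒜 1 * 𝒜 i = 𝒜 (i + 1))
    (hfin : FiniteDimensional k (𝒜 1))
    (s₁ : ℕ) (hs₁ : s₁ = Module.finrank k (𝒜 1)) (hs₁pos : 1 ≤ s₁)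
    (d : ℕ) (hd : 2 ≤ d) (θ : S) (hθ : θ ∈ 𝒜 d) :
    ∃ M Mc : Matrix (Fin (2 ^ (s₁ - 1))) (Fin (2 ^ (s₁ - 1))) S,
      (∀ i j, ∃ e : ℕ, 1 ≤ e ∧ M i j ∈ 𝒜 e) ∧
      (∀ i j, ∃ e : ℕ, 1 ≤ e ∧ Mc i j ∈ 𝒜 e) ∧
      M * Mc = θ • (1 : Matrix (Fin (2 ^ (s₁ - 1))) (Fin (2 ^ (s₁ - 1))) S) ∧
      Mc * M = θ • (1 : Matrix (Fin (2 ^ (s₁ - 1))) (Fin (2 ^ (s₁ - 1))) S) := by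
  obtain ⟨x, y, hx, hy, hθeq⟩ := decomp_mf 𝒜 hgen s₁ hs₁ d hd θ hθ
  obtain ⟨n, rfl⟩ : ∃ n, s₁ = n + 1 := ⟨s₁ - 1, by omega⟩
  obtain ⟨M, Mc, h1, h2, hmul1, hmul2⟩ :=
    aux_mf 𝒜 (d - 1) (by omega) n x y hx hy
  exact ⟨M, Mc, h1, h2, by rw [hmul1, ← hθeq], by rw [hmul2, ← hθeq]⟩
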